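/- Let d ≥ 1 and j ≥ 1 an integer. There is a constant C = C(d) with the following property. Let C₀ > 0, h ∈ (0,1], and let b : ℝ^d × ℝ^d × ℝ^d → ℂ be measurable such that for each (x,y) the map ξ ↦ b(x,y,ξ) is C^{d+1}, is supported in the annulus {2^{j−1} ≤ ‖ξ‖ ≤ 2^{j+1}}, and satisfies |∂_ξ^α b(x,y,ξ)| ≤ C₀·⟨ξ⟩^{−(|α|+1)} for all |α| ≤ d+1. Then the operator T_h with kernel K_h satisfies ‖T_h f‖_{L²} ≤ C·C₀·2^{−j·d/(d+1)}·‖f‖_{L²} for every f ∈ L²(ℝ^d), uniformly in h ∈ (0,1]. -/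

import Mathlib

open MeasureTheory Complex Metric Set
open scoped ENNReal FourierTransform RealInnerProductSpace

noncomputable section
set_option maxHeartbeats 1000000

lemma my_schur {d : ℕ} (A F : EuclideanSpace ℝ (Fin d) → ℝ≥0∞)
    (hA : Measurable A) (hF : Measurable F) :
    ∫⁻ x, (∫⁻ y, A (x - y) * F y) ^ (2 : ℝ) ≤
      (∫⁻ z, A z) ^ (2 : ℝ) * ∫⁻ y, F y ^ (2 : ℝ) := by
  set IA := ∫⁻ z, A z with hIA
  have hAx : ∀ x : EuclideanSpace ℝ (Fin d), Measurable fun y => A (x - y) :=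
    fun x => hA.comp (measurable_const.sub measurable_id)
  have hsubl : ∀ x : EuclideanSpace ℝ (Fin d), ∫⁻ y, A (x - y) = IA := fun x =>
    (Measure.measurePreserving_sub_left volume x).lintegral_comp hA
  have hconj : Real.HolderConjugate 2 2 := Real.HolderConjugate.two_two
  have step2 : ∀ x, (∫⁻ y, A (x - y) * F y) ^ (2 : ℝ) ≤
      IA * ∫⁻ y, A (x - y) * F y ^ (2 : ℝ) := by
    intro x
    have hold := ENNReal.lintegral_mul_le_Lp_mul_Lq volume hconj
      (((hAx x).pow_const (1 / 2 : ℝ)).aemeasurable)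
      ((((hAx x).pow_const (1 / 2 : ℝ)).mul hF).aemeasurable)
    have e1 : ∀ y, ((fun y => A (x - y) ^ (1 / 2 : ℝ)) *
        fun y => A (x - y) ^ (1 / 2 : ℝ) * F y) y = A (x - y) * F y := by
      intro y
      simp only [Pi.mul_apply, ← mul_assoc]
      rw [← ENNReal.rpow_add_of_nonneg _ _ (by norm_num) (by norm_num)]
      norm_num
    have e2 : ∀ y, (A (x - y) ^ (1 / 2 : ℝ)) ^ (2 : ℝ) = A (x - y) := by
      intro y
      rw [← ENNReal.rpow_mul]; norm_num
    have e3 : ∀ y, (A (x - y) ^ (1 / 2 : ℝ) * F y) ^ (2 : ℝ)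
        = A (x - y) * F y ^ (2 : ℝ) := by
      intro y
      rw [ENNReal.mul_rpow_of_nonneg _ _ (by norm_num : (0:ℝ) ≤ 2), e2]
    simp only [e1, e2, e3] at hold
    calc (∫⁻ y, A (x - y) * F y) ^ (2 : ℝ)
        ≤ ((∫⁻ y, A (x - y)) ^ (1 / 2 : ℝ) *
            (∫⁻ y, A (x - y) * F y ^ (2 : ℝ)) ^ (1 / 2 : ℝ)) ^ (2 : ℝ) := by
          gcongr
          calc ∫⁻ y, A (x - y) * F y
              = ∫⁻ y, ((fun y => A (x - y) ^ (1 / 2 : ℝ)) *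
                  ((fun y => A (x - y) ^ (1 / 2 : ℝ)) * F)) y :=
                lintegral_congr fun y => (e1 y).symm
            _ ≤ _ := hold
            _ = _ := by congr 2; exact lintegral_congr fun y => e3 y
      _ = IA * ∫⁻ y, A (x - y) * F y ^ (2 : ℝ) := by
          rw [ENNReal.mul_rpow_of_nonneg _ _ (by norm_num : (0:ℝ) ≤ 2),
            ← ENNReal.rpow_mul, ← ENNReal.rpow_mul, hsubl x]
          norm_num
  have hprod : Measurable fun p : (EuclideanSpace ℝ (Fin d)) × (EuclideanSpace ℝ (Fin d)) =>
      A (p.1 - p.2) * F p.2 ^ (2 : ℝ) :=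
    (hA.comp (measurable_fst.sub measurable_snd)).mul
      ((hF.comp measurable_snd).pow_const _)
  calc ∫⁻ x, (∫⁻ y, A (x - y) * F y) ^ (2 : ℝ)
      ≤ ∫⁻ x, IA * ∫⁻ y, A (x - y) * F y ^ (2 : ℝ) := lintegral_mono step2
    _ = IA * ∫⁻ x, ∫⁻ y, A (x - y) * F y ^ (2 : ℝ) := by
        rw [lintegral_const_mul _ hprod.lintegral_prod_right']
    _ = IA * ∫⁻ y, ∫⁻ x, A (x - y) * F y ^ (2 : ℝ) := by
        rw [lintegral_lintegral_swap hprod.aemeasurable]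
    _ = IA * ∫⁻ y, IA * F y ^ (2 : ℝ) := by
        congr 1
        refine lintegral_congr fun y => ?_
        rw [lintegral_mul_const (f := fun x => A (x - y)) _
            (hA.comp (measurable_id.sub measurable_const)),
          lintegral_sub_right_eq_self A y, mul_comm]
    _ = (IA ^ (2 : ℝ)) * ∫⁻ y, F y ^ (2 : ℝ) := by
        rw [lintegral_const_mul _ (hF.pow_const _), ENNReal.rpow_two, sq, mul_assoc]


lemma my_kernel_decay {d : ℕ} (hd : 1 ≤ d) {j : ℕ} (hj : 1 ≤ j) {C₀ h : ℝ}
    (hC₀ : 0 < C₀) (hh : 0 < h)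
    (g : EuclideanSpace ℝ (Fin d) → ℂ)
    (hg : ContDiff ℝ (d + 1 : ℕ) g)
    (hsupp : ∀ ξ, g ξ ≠ 0 → (2 : ℝ) ^ (j - 1) ≤ ‖ξ‖ ∧ ‖ξ‖ ≤ (2 : ℝ) ^ (j + 1))
    (hder : ∀ ξ, ∀ k : ℕ, k ≤ d + 1 →
      ‖iteratedFDeriv ℝ k g ξ‖ ≤ C₀ * (1 + ‖ξ‖ ^ 2) ^ (-((k : ℝ) + 1) / 2))
    (v : EuclideanSpace ℝ (Fin d)) :
    ‖∫ ξ, g ξ * Complex.exp (Complex.I * ((inner ℝ v ξ : ℝ) : ℂ) / (h : ℂ))‖ ≤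
      ((d : ℝ) + 2) * 2 ^ (3 * d + 4) *
        (volume (closedBall (0 : EuclideanSpace ℝ (Fin d)) 2)).toReal *
        C₀ * ((2 : ℝ) ^ j)⁻¹ * (2 : ℝ) ^ (j * d) *
        ((1 + (2 : ℝ) ^ j / (2 * Real.pi * h) * ‖v‖) ^ (d + 1))⁻¹ := by
  have hπ := Real.pi_pos
  set lam : ℝ := (2 : ℝ) ^ j with hlam_def
  have hlam : (0 : ℝ) < lam := by positivity
  set V : ℝ := (volume (closedBall (0 : EuclideanSpace ℝ (Fin d)) 2)).toReal with hV_def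
  have hV : 0 ≤ V := ENNReal.toReal_nonneg
  have hVpos : 0 < V := by
    rw [hV_def]
    apply ENNReal.toReal_pos
    · exact (measure_closedBall_pos volume 0 (by norm_num)).ne'
    · exact measure_closedBall_lt_top.ne
  set B : ℝ := C₀ * 2 ^ (d + 2) * ((2 : ℝ) ^ j)⁻¹ with hB_def
  have hB : 0 < B := by positivity
  set gt : EuclideanSpace ℝ (Fin d) → ℂ := fun η => g (lam • η) with hgt_def
  set L : EuclideanSpace ℝ (Fin d) →L[ℝ] EuclideanSpace ℝ (Fin d) :=
    lam • ContinuousLinearMap.id ℝ (EuclideanSpace ℝ (Fin d)) with hL_def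
  have hLapp : ∀ η, L η = lam • η := fun η => rfl
  have hLnorm : ‖L‖ ≤ lam := by
    refine ContinuousLinearMap.opNorm_le_bound _ hlam.le fun x => ?_
    rw [hLapp, norm_smul, Real.norm_eq_abs, abs_of_pos hlam]
  have hgtL : gt = g ∘ L := rfl
  have hgtCD : ContDiff ℝ (d + 1 : ℕ) gt := hg.comp L.contDiff
  -- support of the rescaled function
  have h2pow : (2 : ℝ) ^ (j - 1) * 2 = lam := by
    rw [hlam_def, ← pow_succ]; congr 1; omega
  have h2pow' : (2 : ℝ) ^ (j + 1) = lam * 2 := by rw [hlam_def, pow_succ]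
  have hsupp2 : ∀ η, gt η ≠ 0 → 2⁻¹ ≤ ‖η‖ ∧ ‖η‖ ≤ 2 := by
    intro η hη
    obtain ⟨h1, h2⟩ := hsupp _ hη
    rw [norm_smul, Real.norm_eq_abs, abs_of_pos hlam] at h1 h2
    constructor
    · rw [← h2pow] at h1; nlinarith
    · rw [h2pow'] at h2; nlinarith
  have htlow : tsupport gt ⊆ {η | 2⁻¹ ≤ ‖η‖ ∧ ‖η‖ ≤ 2} := by
    apply closure_minimal
    · intro η hη; exact hsupp2 η hη
    · exact (isClosed_le continuous_const continuous_norm).inter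
        (isClosed_le continuous_norm continuous_const)
  have hcs : HasCompactSupport gt := by
    apply HasCompactSupport.intro (isCompact_closedBall (0 : EuclideanSpace ℝ (Fin d)) 2)
    intro η hη
    by_contra hne
    exact hη (mem_closedBall_zero_iff.2 (hsupp2 η hne).2)
  -- uniform bound on iterated derivatives of the rescaled function
  have hderiv_bound : ∀ m : ℕ, m ≤ d + 1 → ∀ η,
      ‖iteratedFDeriv ℝ m gt η‖ ≤
        indicator (closedBall (0 : EuclideanSpace ℝ (Fin d)) 2) (fun _ => B) η := by
    intro m hm η
    by_cases hη : iteratedFDeriv ℝ m gt η = 0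
    · rw [hη, norm_zero]
      exact indicator_nonneg (fun _ _ => hB.le) _
    · have hmem : η ∈ tsupport gt :=
        support_iteratedFDeriv_subset m (Function.mem_support.2 hη)
      obtain ⟨hlo, hhi⟩ := htlow hmem
      rw [indicator_of_mem (mem_closedBall_zero_iff.2 hhi)]
      have hcomp : iteratedFDeriv ℝ m gt η =
          (iteratedFDeriv ℝ m g (L η)).compContinuousLinearMap fun _ => L := by
        rw [hgtL]
        exact L.iteratedFDeriv_comp_right hg η (by exact_mod_cast hm)
      have hnorm1 : ‖iteratedFDeriv ℝ m gt η‖ ≤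
          ‖iteratedFDeriv ℝ m g (lam • η)‖ * lam ^ m := by
        rw [hcomp]
        refine (ContinuousMultilinearMap.norm_compContinuousLinearMap_le _ _).trans ?_
        have hprod : (∏ _i : Fin m, ‖L‖) ≤ lam ^ m := by
          rw [Finset.prod_const, Finset.card_univ, Fintype.card_fin]
          exact pow_le_pow_left₀ (norm_nonneg _) hLnorm m
        rw [hLapp]
        exact mul_le_mul_of_nonneg_left hprod (norm_nonneg _)
      have hs : (2 : ℝ) ^ (j - 1) ≤ ‖lam • η‖ := by
        rw [norm_smul, Real.norm_eq_abs, abs_of_pos hlam]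
        nlinarith
      have h2jpos : (0:ℝ) < (2:ℝ) ^ (j-1) := by positivity
      have hbase : ((2:ℝ) ^ (j-1)) ^ 2 ≤ 1 + ‖lam • η‖ ^ 2 := by nlinarith
      have hexp : -((m : ℝ) + 1) / 2 ≤ 0 := by
        have : (0:ℝ) ≤ (m:ℝ) + 1 := by positivity
        linarith
      have hrpow : (1 + ‖lam • η‖ ^ 2) ^ (-((m : ℝ) + 1) / 2) ≤
          (((2:ℝ) ^ (j-1)) ^ 2) ^ (-((m : ℝ) + 1) / 2) :=
        Real.rpow_le_rpow_of_nonpos (by positivity) hbase hexp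
      have hj1 : ((j - 1 : ℕ) : ℝ) = (j : ℝ) - 1 := by
        rw [Nat.cast_sub hj]; norm_num
      have hkey : (((2:ℝ) ^ (j-1)) ^ 2) ^ (-((m : ℝ) + 1) / 2) * lam ^ m ≤
          2 ^ (d + 2) * ((2 : ℝ) ^ j)⁻¹ := by
        have hid : (((2:ℝ) ^ (j-1)) ^ 2) ^ (-((m : ℝ) + 1) / 2) * lam ^ m =
            (2:ℝ) ^ ((m : ℝ) + 1 - j) := by
          rw [← Real.rpow_natCast 2 (j-1), ← Real.rpow_natCast ((2:ℝ) ^ ((j-1:ℕ):ℝ)) 2,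
            ← Real.rpow_mul (by norm_num), ← Real.rpow_mul (by norm_num),
            hlam_def, ← Real.rpow_natCast 2 j, ← Real.rpow_natCast ((2:ℝ) ^ ((j:ℕ):ℝ)) m,
            ← Real.rpow_mul (by norm_num), ← Real.rpow_add (by norm_num)]
          congr 1
          rw [hj1]
          push_cast
          ring
        rw [hid]
        have hle : (2:ℝ) ^ ((m : ℝ) + 1 - j) ≤ (2:ℝ) ^ ((d : ℝ) + 2 - j) := by
          apply Real.rpow_le_rpow_of_exponent_le one_le_two
          have : (m : ℝ) ≤ (d : ℝ) + 1 := by exact_mod_cast hm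
          linarith
        refine hle.trans ?_
        rw [show ((d : ℝ) + 2 - j) = ((d + 2 : ℕ) : ℝ) - ((j : ℕ) : ℝ) by push_cast; ring,
          Real.rpow_sub (by norm_num), Real.rpow_natCast, Real.rpow_natCast, div_eq_mul_inv]
      calc ‖iteratedFDeriv ℝ m gt η‖ ≤ ‖iteratedFDeriv ℝ m g (lam • η)‖ * lam ^ m := hnorm1
        _ ≤ (C₀ * (1 + ‖lam • η‖ ^ 2) ^ (-((m : ℝ) + 1) / 2)) * lam ^ m :=
            mul_le_mul_of_nonneg_right (hder _ m hm) (by positivity)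
        _ ≤ (C₀ * (((2:ℝ) ^ (j-1)) ^ 2) ^ (-((m : ℝ) + 1) / 2)) * lam ^ m :=
            mul_le_mul_of_nonneg_right (mul_le_mul_of_nonneg_left hrpow hC₀.le) (by positivity)
        _ = C₀ * ((((2:ℝ) ^ (j-1)) ^ 2) ^ (-((m : ℝ) + 1) / 2) * lam ^ m) := by ring
        _ ≤ C₀ * (2 ^ (d + 2) * ((2 : ℝ) ^ j)⁻¹) := mul_le_mul_of_nonneg_left hkey hC₀.le
        _ = B := by rw [hB_def]; ring
  -- integrability of iterated derivatives
  have hiFint : ∀ m : ℕ, m ≤ d + 1 → Integrable (iteratedFDeriv ℝ m gt) := by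
    intro m hm
    exact (hgtCD.continuous_iteratedFDeriv (by exact_mod_cast hm)).integrable_of_hasCompactSupport
      (hcs.iteratedFDeriv m)
  have hIbound : ∀ m : ℕ, m ≤ d + 1 → ∫ η, ‖iteratedFDeriv ℝ m gt η‖ ≤ V * B := by
    intro m hm
    have hind : Integrable
        (indicator (closedBall (0 : EuclideanSpace ℝ (Fin d)) 2) (fun _ => B)) := by
      rw [integrable_indicator_iff measurableSet_closedBall]
      exact integrableOn_const measure_closedBall_lt_top.ne
    calc ∫ η, ‖iteratedFDeriv ℝ m gt η‖
        ≤ ∫ η, indicator (closedBall (0 : EuclideanSpace ℝ (Fin d)) 2) (fun _ => B) η :=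
          integral_mono (hiFint m hm).norm hind (hderiv_bound m hm)
      _ = V * B := by
          rw [integral_indicator_const _ measurableSet_closedBall, smul_eq_mul, hV_def, measureReal_def]
  have h'f : ∀ (k n : ℕ), (k : ℕ∞) ≤ (0 : ℕ) → (n : ℕ∞) ≤ ((d + 1 : ℕ) : ℕ∞) →
      Integrable (fun η : EuclideanSpace ℝ (Fin d) =>
        ‖η‖ ^ k * ‖iteratedFDeriv ℝ n gt η‖) := by
    intro k n hk hn
    have hk0 : k = 0 := by exact_mod_cast le_zero_iff.mp (by exact_mod_cast hk)
    subst hk0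
    simpa using (hiFint n (by exact_mod_cast hn)).norm
  -- Fourier decay
  have hdecay : ∀ u : EuclideanSpace ℝ (Fin d), ‖u‖ ^ (d + 1) * ‖𝓕 gt u‖ ≤
      2 ^ (d + 1) * (((d : ℝ) + 2) * (V * B)) := by
    intro u
    have hmain := Real.pow_mul_norm_iteratedFDeriv_fourier_le
      (K := (0 : ℕ∞)) (N := ((d + 1 : ℕ) : ℕ∞)) hgtCD h'f
      (le_refl (0 : ℕ∞)) (le_refl _) u
    rw [norm_iteratedFDeriv_zero] at hmain
    refine hmain.trans ?_
    have hsum : ∑ p ∈ Finset.range (0 + 1) ×ˢ Finset.range (d + 1 + 1),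
        ∫ η, ‖η‖ ^ p.1 * ‖iteratedFDeriv ℝ p.2 gt η‖ ≤ ((d : ℝ) + 2) * (V * B) := by
      have hcard : (Finset.range (0 + 1) ×ˢ Finset.range (d + 1 + 1)).card = d + 2 := by
        rw [Finset.card_product, Finset.card_range, Finset.card_range]
        ring
      calc ∑ p ∈ Finset.range (0 + 1) ×ˢ Finset.range (d + 1 + 1),
          ∫ η, ‖η‖ ^ p.1 * ‖iteratedFDeriv ℝ p.2 gt η‖
          ≤ (Finset.range (0 + 1) ×ˢ Finset.range (d + 1 + 1)).card • (V * B) := by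
            apply Finset.sum_le_card_nsmul
            intro p hp
            rw [Finset.mem_product, Finset.mem_range, Finset.mem_range] at hp
            have hp1 : p.1 = 0 := Nat.lt_one_iff.mp hp.1
            have hp2 : p.2 ≤ d + 1 := Nat.lt_succ_iff.mp hp.2
            calc ∫ η, ‖η‖ ^ p.1 * ‖iteratedFDeriv ℝ p.2 gt η‖
                = ∫ η, ‖iteratedFDeriv ℝ p.2 gt η‖ := by
                  simp [hp1]
              _ ≤ V * B := hIbound p.2 hp2
        _ = ((d : ℝ) + 2) * (V * B) := by
            rw [hcard, nsmul_eq_mul]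
            push_cast
            ring
    have h20 : ((2 : ℝ) * (0 : ℕ) + 2) = 2 := by norm_num
    calc (2 * Real.pi) ^ 0 * (2 * (0:ℕ) + 2) ^ (d + 1) *
        ∑ p ∈ Finset.range (0 + 1) ×ˢ Finset.range (d + 1 + 1),
          ∫ η, ‖η‖ ^ p.1 * ‖iteratedFDeriv ℝ p.2 gt η‖
        = 2 ^ (d + 1) *
          ∑ p ∈ Finset.range (0 + 1) ×ˢ Finset.range (d + 1 + 1),
            ∫ η, ‖η‖ ^ p.1 * ‖iteratedFDeriv ℝ p.2 gt η‖ := by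
          rw [pow_zero, one_mul, h20]
      _ ≤ 2 ^ (d + 1) * (((d : ℝ) + 2) * (V * B)) :=
          mul_le_mul_of_nonneg_left hsum (by positivity)
  -- flat bound
  have hflat : ∀ u : EuclideanSpace ℝ (Fin d), ‖𝓕 gt u‖ ≤ V * B := by
    intro u
    have h1 : ‖𝓕 gt u‖ ≤ ∫ η, ‖gt η‖ :=
      VectorFourier.norm_fourierIntegral_le_integral_norm _ _ _ gt u
    refine h1.trans ?_
    have := hIbound 0 (Nat.zero_le _)
    simpa [norm_iteratedFDeriv_zero] using this
  -- combined decay bound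
  have hcomb : ∀ u : EuclideanSpace ℝ (Fin d), ‖𝓕 gt u‖ ≤
      2 ^ (d + 1) * (2 ^ (d + 1) * (((d : ℝ) + 2) * (V * B))) * ((1 + ‖u‖) ^ (d + 1))⁻¹ := by
    intro u
    have hVB : 0 ≤ V * B := by positivity
    have hVB_le : V * B ≤ 2 ^ (d + 1) * (((d : ℝ) + 2) * (V * B)) := by
      have h1 : (1:ℝ) ≤ 2 ^ (d + 1) := one_le_pow₀ one_le_two
      have h2 : (1:ℝ) ≤ 2 ^ (d + 1) * ((d : ℝ) + 2) := by nlinarith [Nat.cast_nonneg (α := ℝ) d]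
      calc V * B = 1 * (V * B) := (one_mul _).symm
        _ ≤ (2 ^ (d + 1) * ((d : ℝ) + 2)) * (V * B) := mul_le_mul_of_nonneg_right h2 hVB
        _ = 2 ^ (d + 1) * (((d : ℝ) + 2) * (V * B)) := by ring
    have hmain : (1 + ‖u‖) ^ (d + 1) * ‖𝓕 gt u‖ ≤
        2 ^ (d + 1) * (2 ^ (d + 1) * (((d : ℝ) + 2) * (V * B))) := by
      rcases le_total ‖u‖ 1 with hu | hu
      · refine mul_le_mul ?_ ((hflat u).trans hVB_le) (norm_nonneg _) (by positivity)
        exact pow_le_pow_left₀ (by positivity) (by linarith) _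
      · calc (1 + ‖u‖) ^ (d + 1) * ‖𝓕 gt u‖ ≤ (2 * ‖u‖) ^ (d + 1) * ‖𝓕 gt u‖ :=
            mul_le_mul_of_nonneg_right
              (pow_le_pow_left₀ (by positivity) (by linarith) _) (norm_nonneg _)
          _ = 2 ^ (d + 1) * (‖u‖ ^ (d + 1) * ‖𝓕 gt u‖) := by rw [mul_pow]; ring
          _ ≤ 2 ^ (d + 1) * (2 ^ (d + 1) * (((d : ℝ) + 2) * (V * B))) :=
            mul_le_mul_of_nonneg_left (hdecay u) (by positivity)
    have hpos : (0:ℝ) < (1 + ‖u‖) ^ (d + 1) := by positivity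
    calc ‖𝓕 gt u‖ = ((1 + ‖u‖) ^ (d + 1))⁻¹ * ((1 + ‖u‖) ^ (d + 1) * ‖𝓕 gt u‖) := by
          field_simp
      _ ≤ ((1 + ‖u‖) ^ (d + 1))⁻¹ *
          (2 ^ (d + 1) * (2 ^ (d + 1) * (((d : ℝ) + 2) * (V * B)))) :=
          mul_le_mul_of_nonneg_left hmain (by positivity)
      _ = 2 ^ (d + 1) * (2 ^ (d + 1) * (((d : ℝ) + 2) * (V * B))) *
          ((1 + ‖u‖) ^ (d + 1))⁻¹ := by ring
  -- change of variables
  set c : ℝ := lam / (2 * Real.pi * h) with hc_def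
  have hcpos : 0 < c := by
    apply div_pos hlam
    positivity
  have hCOV : ∫ ξ, g ξ * Complex.exp (Complex.I * ((inner ℝ v ξ : ℝ) : ℂ) / (h : ℂ)) =
      (lam ^ d : ℝ) • 𝓕 gt ((-c) • v) := by
    have h1 := Measure.integral_comp_smul_of_nonneg
      (volume : Measure (EuclideanSpace ℝ (Fin d)))
      (fun ξ => g ξ * Complex.exp (Complex.I * ((inner ℝ v ξ : ℝ) : ℂ) / (h : ℂ))) lam
      (hR := hlam.le)
    rw [finrank_euclideanSpace_fin] at h1
    have h2 : ∫ ξ, g ξ * Complex.exp (Complex.I * ((inner ℝ v ξ : ℝ) : ℂ) / (h : ℂ)) =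
        (lam ^ d : ℝ) • ∫ η, g (lam • η) *
          Complex.exp (Complex.I * ((inner ℝ v (lam • η) : ℝ) : ℂ) / (h : ℂ)) := by
      rw [h1, smul_smul, mul_inv_cancel₀ (pow_ne_zero _ hlam.ne'), one_smul]
    rw [h2]
    congr 1
    rw [Real.fourier_eq']
    apply integral_congr_ae
    filter_upwards with η
    have hip : (inner ℝ v (lam • η) : ℝ) = lam * (inner ℝ η v : ℝ) := by
      rw [real_inner_smul_right, real_inner_comm]
    have hip2 : (inner ℝ η ((-c) • v) : ℝ) = -c * (inner ℝ η v : ℝ) := real_inner_smul_right _ _ _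
    rw [hip, hip2, smul_eq_mul, mul_comm]
    congr 1
    have hπne : (Real.pi : ℝ) ≠ 0 := hπ.ne'
    have hhne : (h : ℂ) ≠ 0 := by exact_mod_cast hh.ne'
    have hπc : (Real.pi : ℂ) ≠ 0 := by exact_mod_cast hπne
    congr 1
    rw [hc_def]
    push_cast
    field_simp
  rw [hCOV, norm_smul, Real.norm_eq_abs, abs_of_pos (pow_pos hlam d)]
  have hnu : ‖(-c) • v‖ = c * ‖v‖ := by
    rw [norm_smul, Real.norm_eq_abs, abs_neg, abs_of_pos hcpos]
  calc lam ^ d * ‖𝓕 gt ((-c) • v)‖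
      ≤ lam ^ d * (2 ^ (d + 1) * (2 ^ (d + 1) * (((d : ℝ) + 2) * (V * B))) *
          ((1 + ‖(-c) • v‖) ^ (d + 1))⁻¹) :=
        mul_le_mul_of_nonneg_left (hcomb _) (by positivity)
    _ = ((d : ℝ) + 2) * 2 ^ (3 * d + 4) * V * C₀ * ((2 : ℝ) ^ j)⁻¹ * (2 : ℝ) ^ (j * d) *
        ((1 + (2 : ℝ) ^ j / (2 * Real.pi * h) * ‖v‖) ^ (d + 1))⁻¹ := by
      rw [hnu, hB_def, hc_def, hlam_def, pow_mul]
      rw [show 3 * d + 4 = (d + 1) + ((d + 1) + (d + 2)) by ring]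
      rw [pow_add, pow_add]
      ring


/-- The oscillatory-integral kernel
`K_h(x,y) = (2πh)^{-d} ∫ b(x,y,ξ) e^{i(x-y)·ξ/h} dξ`. -/
def Kker {d : ℕ} (h : ℝ)
    (b : EuclideanSpace ℝ (Fin d) → EuclideanSpace ℝ (Fin d) →
      EuclideanSpace ℝ (Fin d) → ℂ)
    (x y : EuclideanSpace ℝ (Fin d)) : ℂ :=
  ((2 * Real.pi * h : ℂ) ^ d)⁻¹ *
    ∫ ξ, b x y ξ * Complex.exp (Complex.I * ((inner ℝ (x - y) ξ : ℝ) : ℂ) / (h : ℂ))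


/-- **Dyadic piece estimate from the proof of Lemma A.1 of the paper**: if the amplitude
`b` is supported in the annulus `2^{j-1} ≤ ‖ξ‖ ≤ 2^{j+1}` and satisfies
`|∂_ξ^α b| ≤ C₀⟨ξ⟩^{-(|α|+1)}` for `|α| ≤ d+1`, then the associated operator satisfies
`‖T_h‖_{L²→L²} ≤ C(d)·C₀·2^{-jd/(d+1)}`, uniformly in `j ≥ 1` and `h ∈ (0,1]`. -/
theorem stmt_11 (d : ℕ) (hd : 1 ≤ d) :
    ∃ C : ℝ, 0 < C ∧
      ∀ j : ℕ, 1 ≤ j →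
      ∀ (C₀ h : ℝ), 0 < C₀ → 0 < h → h ≤ 1 →
      ∀ b : EuclideanSpace ℝ (Fin d) → EuclideanSpace ℝ (Fin d) →
          EuclideanSpace ℝ (Fin d) → ℂ,
        (∀ x y, ContDiff ℝ (d + 1 : ℕ) (b x y)) →
        (∀ x y ξ, b x y ξ ≠ 0 → (2 : ℝ) ^ (j - 1) ≤ ‖ξ‖ ∧ ‖ξ‖ ≤ (2 : ℝ) ^ (j + 1)) →
        (∀ x y ξ, ∀ k : ℕ, k ≤ d + 1 →
          ‖iteratedFDeriv ℝ k (b x y) ξ‖ ≤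
            C₀ * (1 + ‖ξ‖ ^ 2) ^ (-((k : ℝ) + 1) / 2)) →
        ∀ f : EuclideanSpace ℝ (Fin d) → ℂ, MemLp f 2 volume →
          eLpNorm (fun x => ∫ y, Kker h b x y * f y) 2 volume ≤
            ENNReal.ofReal (C * C₀ * (2 : ℝ) ^ (-((j : ℝ) * d) / ((d : ℝ) + 1))) *
              eLpNorm f 2 volume := by
  have hπ := Real.pi_pos
  set V : ℝ := (volume (closedBall (0 : EuclideanSpace ℝ (Fin d)) 2)).toReal with hV_def
  have hV : 0 ≤ V := ENNReal.toReal_nonneg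
  have hVpos : 0 < V := by
    rw [hV_def]
    apply ENNReal.toReal_pos
    · exact (measure_closedBall_pos volume 0 (by norm_num)).ne'
    · exact measure_closedBall_lt_top.ne
  set q : EuclideanSpace ℝ (Fin d) → ℝ := fun z => ((1 + ‖z‖) ^ (d + 1))⁻¹ with hq_def
  have hq_nonneg : ∀ z, 0 ≤ q z := fun z => by positivity
  set Iq : ℝ := ∫ z, q z with hIq_def
  have hIq : 0 ≤ Iq := integral_nonneg hq_nonneg
  have hq_cont : Continuous q := by
    apply Continuous.inv₀
    · exact (continuous_const.add continuous_norm).pow _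
    · intro z; positivity
  have hq_int : Integrable q := by
    have hfr : ((Module.finrank ℝ (EuclideanSpace ℝ (Fin d)) : ℝ)) < ((d : ℝ) + 1) := by
      rw [finrank_euclideanSpace_fin]; linarith
    have h1 : Integrable (fun z : EuclideanSpace ℝ (Fin d) => (1 + ‖z‖) ^ (-((d : ℝ) + 1))) :=
      integrable_one_add_norm hfr
    refine h1.congr (ae_of_all _ fun z => ?_)
    have hz : (0:ℝ) < 1 + ‖z‖ := by positivity
    show (1 + ‖z‖) ^ (-((d:ℝ) + 1)) = ((1 + ‖z‖) ^ (d + 1))⁻¹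
    rw [show -((d:ℝ) + 1) = -(((d + 1 : ℕ)) : ℝ) by push_cast; ring,
      Real.rpow_neg hz.le, Real.rpow_natCast]
  refine ⟨((d : ℝ) + 2) * 2 ^ (3 * d + 4) * (V + 1) * (Iq + 1), by positivity, ?_⟩
  intro j hj C₀ h hC₀ hh hh1 b hbCD hbsupp hbder f hf
  -- constants
  set cc : ℝ := (2 : ℝ) ^ j / (2 * Real.pi * h) with hcc_def
  have h2πh : (0:ℝ) < 2 * Real.pi * h := mul_pos (by positivity) hh
  have hccpos : 0 < cc := div_pos (by positivity) h2πh
  set κ : ℝ := ((2 * Real.pi * h) ^ d)⁻¹ *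
    (((d : ℝ) + 2) * 2 ^ (3 * d + 4) * V * C₀ * ((2 : ℝ) ^ j)⁻¹ * (2 : ℝ) ^ (j * d)) with hκ_def
  have hκpos : 0 < κ :=
    mul_pos (inv_pos.2 (pow_pos h2πh d))
      (mul_pos (mul_pos (mul_pos (mul_pos (by positivity) hVpos) hC₀) (by positivity))
        (by positivity))
  set ρ : EuclideanSpace ℝ (Fin d) → ℝ := fun z => κ * q (cc • z) with hρ_def
  set A : EuclideanSpace ℝ (Fin d) → ℝ≥0∞ := fun z => ENNReal.ofReal (ρ z) with hA_def
  have hρ_eq : ∀ z, ρ z = κ * ((1 + cc * ‖z‖) ^ (d + 1))⁻¹ := by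
    intro z
    show κ * q (cc • z) = _
    rw [hq_def]
    simp only []
    rw [norm_smul, Real.norm_eq_abs, abs_of_pos hccpos]
  -- kernel bound
  have hker : ∀ x y, (‖Kker h b x y‖₊ : ℝ≥0∞) ≤ A (x - y) := by
    intro x y
    rw [← enorm_eq_nnnorm, ← ofReal_norm]
    apply ENNReal.ofReal_le_ofReal
    rw [hρ_eq]
    have hdecay := my_kernel_decay hd hj hC₀ hh (b x y) (hbCD x y) (hbsupp x y)
      (hbder x y) (x - y)
    have hnorm2πh : ‖((2 * Real.pi * h : ℂ)) ^ d‖ = (2 * Real.pi * h) ^ d := by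
      rw [norm_pow, show (2 * (Real.pi : ℂ) * (h : ℂ)) = ((2 * Real.pi * h : ℝ) : ℂ) by
        push_cast; ring, Complex.norm_real, Real.norm_eq_abs, abs_of_pos h2πh]
    calc ‖Kker h b x y‖
        = ‖((2 * Real.pi * h : ℂ) ^ d)⁻¹‖ *
          ‖∫ ξ, b x y ξ * Complex.exp (Complex.I * ((inner ℝ (x - y) ξ : ℝ) : ℂ) / (h : ℂ))‖ := by
          rw [Kker, norm_mul]
      _ ≤ ((2 * Real.pi * h) ^ d)⁻¹ *
          (((d : ℝ) + 2) * 2 ^ (3 * d + 4) * V * C₀ * ((2 : ℝ) ^ j)⁻¹ * (2 : ℝ) ^ (j * d) *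
            ((1 + (2 : ℝ) ^ j / (2 * Real.pi * h) * ‖x - y‖) ^ (d + 1))⁻¹) := by
          rw [norm_inv, hnorm2πh]
          exact mul_le_mul_of_nonneg_left hdecay (inv_nonneg.2 (pow_nonneg h2πh.le d))
      _ = κ * ((1 + cc * ‖x - y‖) ^ (d + 1))⁻¹ := by
          rw [hκ_def, hcc_def]; ring
  -- integral of A
  have hρ_int : Integrable ρ := ((hq_int.comp_smul hccpos.ne').const_mul κ)
  have hlintA : ∫⁻ z, A z = ENNReal.ofReal (κ * ((cc ^ d)⁻¹ * Iq)) := by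
    have h1 : ∫ z, ρ z = κ * ((cc ^ d)⁻¹ * Iq) := by
      rw [hρ_def, integral_const_mul]
      congr 1
      have h2 := Measure.integral_comp_smul_of_nonneg
        (volume : Measure (EuclideanSpace ℝ (Fin d))) q cc (hR := hccpos.le)
      rw [finrank_euclideanSpace_fin] at h2
      rw [h2, smul_eq_mul, hIq_def]
    rw [← h1, ← ofReal_integral_eq_lintegral_ofReal hρ_int
      (ae_of_all _ fun z => by
        rw [hρ_eq]
        exact mul_nonneg hκpos.le (by positivity))]
  have hvalue : κ * ((cc ^ d)⁻¹ * Iq) =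
      ((d : ℝ) + 2) * 2 ^ (3 * d + 4) * V * Iq * C₀ * ((2 : ℝ) ^ j)⁻¹ := by
    rw [hκ_def, hcc_def, div_pow, pow_mul]
    have h2πh' : (2 * Real.pi * h) ≠ 0 := h2πh.ne'
    have h2j : ((2:ℝ) ^ j) ≠ 0 := by positivity
    field_simp
  have hlintA_le : ∫⁻ z, A z ≤
      ENNReal.ofReal (((d : ℝ) + 2) * 2 ^ (3 * d + 4) * (V + 1) * (Iq + 1) * C₀ *
        (2 : ℝ) ^ (-((j : ℝ) * d) / ((d : ℝ) + 1))) := by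
    rw [hlintA, hvalue]
    apply ENNReal.ofReal_le_ofReal
    have hexp : ((2:ℝ) ^ j)⁻¹ ≤ (2 : ℝ) ^ (-((j : ℝ) * d) / ((d : ℝ) + 1)) := by
      rw [← Real.rpow_natCast 2 j, ← Real.rpow_neg (by norm_num)]
      apply Real.rpow_le_rpow_of_exponent_le one_le_two
      rw [neg_div]
      have hjd : (j : ℝ) * d / ((d : ℝ) + 1) ≤ (j : ℝ) := by
        rw [div_le_iff₀ (by positivity)]
        nlinarith [Nat.cast_nonneg (α := ℝ) j, Nat.cast_nonneg (α := ℝ) d]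
      linarith
    have hab : (0:ℝ) ≤ ((d : ℝ) + 2) * 2 ^ (3 * d + 4) := by positivity
    have h5 : ((d : ℝ) + 2) * 2 ^ (3 * d + 4) * V * Iq * C₀ ≤
        ((d : ℝ) + 2) * 2 ^ (3 * d + 4) * (V + 1) * (Iq + 1) * C₀ := by
      apply mul_le_mul_of_nonneg_right _ hC₀.le
      apply mul_le_mul
      · exact mul_le_mul_of_nonneg_left (by linarith) hab
      · linarith
      · exact hIq
      · exact mul_nonneg hab (by linarith)
    apply mul_le_mul h5 hexp (inv_nonneg.2 (by positivity))
    exact mul_nonneg (mul_nonneg (mul_nonneg hab (by linarith)) (by linarith)) hC₀.le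
  -- measurable version of f
  obtain ⟨hfm, -⟩ := hf
  set f' : EuclideanSpace ℝ (Fin d) → ℂ := hfm.mk f with hf'_def
  have hf'sm : StronglyMeasurable f' := hfm.stronglyMeasurable_mk
  have hff' : f =ᵐ[volume] f' := hfm.ae_eq_mk
  have hmeasA : Measurable A := by
    have hcont : Continuous ρ := by
      apply continuous_const.mul
      exact hq_cont.comp (continuous_const_smul cc)
    exact (ENNReal.continuous_ofReal.comp hcont).measurable
  have hmeasF : Measurable fun y => (‖f' y‖₊ : ℝ≥0∞) :=
    hf'sm.measurable.nnnorm.coe_nnreal_ennreal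
  have hpt : ∀ x, (‖∫ y, Kker h b x y * f y‖₊ : ℝ≥0∞) ≤
      ∫⁻ y, A (x - y) * (‖f' y‖₊ : ℝ≥0∞) := by
    intro x
    have he : ∫ y, Kker h b x y * f y = ∫ y, Kker h b x y * f' y :=
      integral_congr_ae (hff'.mono fun y hy => by simp only [hy])
    rw [he]
    refine le_trans (enorm_integral_le_lintegral_enorm _) (lintegral_mono fun y => ?_)
    rw [enorm_mul]
    exact mul_le_mul_left (hker x y) _
  -- assemble
  rw [eLpNorm_congr_ae hff', eLpNorm_eq_lintegral_rpow_enorm_toReal two_ne_zero ENNReal.ofNat_ne_top,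
    eLpNorm_eq_lintegral_rpow_enorm_toReal two_ne_zero ENNReal.ofNat_ne_top]
  simp only [ENNReal.toReal_ofNat]
  calc (∫⁻ x, (‖∫ y, Kker h b x y * f y‖₊ : ℝ≥0∞) ^ (2:ℝ)) ^ (1/(2:ℝ))
      ≤ (∫⁻ x, (∫⁻ y, A (x - y) * (‖f' y‖₊ : ℝ≥0∞)) ^ (2:ℝ)) ^ (1/(2:ℝ)) := by
        apply ENNReal.rpow_le_rpow _ (by norm_num)
        exact lintegral_mono fun x => ENNReal.rpow_le_rpow (hpt x) (by norm_num)
    _ ≤ ((∫⁻ z, A z) ^ (2:ℝ) * ∫⁻ y, (‖f' y‖₊ : ℝ≥0∞) ^ (2:ℝ)) ^ (1/(2:ℝ)) :=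
        ENNReal.rpow_le_rpow (my_schur A _ hmeasA hmeasF) (by norm_num)
    _ = (∫⁻ z, A z) * (∫⁻ y, (‖f' y‖₊ : ℝ≥0∞) ^ (2:ℝ)) ^ (1/(2:ℝ)) := by
        rw [ENNReal.mul_rpow_of_nonneg _ _ (by norm_num : (0:ℝ) ≤ 1/2), ← ENNReal.rpow_mul]
        norm_num
    _ ≤ ENNReal.ofReal (((d : ℝ) + 2) * 2 ^ (3 * d + 4) * (V + 1) * (Iq + 1) * C₀ *
          (2 : ℝ) ^ (-((j : ℝ) * d) / ((d : ℝ) + 1))) *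
        (∫⁻ y, (‖f' y‖₊ : ℝ≥0∞) ^ (2:ℝ)) ^ (1/(2:ℝ)) :=
        mul_le_mul_left hlintA_le _

end
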